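/- (Theorem 2, part (ii), final bang.) Let B, C be Hermitian n×n matrices, H(v) := vB + (1−v)C, and t_f > 0. Let ρ, p : [0,t_f] → (Hermitian n×n matrices) be continuous, let s : [0,t_f] → [0,1], and suppose: (a) p(t_f) = −C; (b) there is a real constant λ > 0 with Re Tr(p(t)·(−i)[H(s(t)), ρ(t)]) = λ for every t ∈ [0,t_f]; and (c) for every t ∈ [0,t_f] and every v ∈ [0,1], Re Tr(p(t)·(−i)[H(v), ρ(t)]) ≤ λ. Then there exists ε > 0 such that s(t) = 1 for all t ∈ (t_f − ε, t_f]. -/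

import Mathlib

open MeasureTheory Matrix

noncomputable section

namespace Stmt2

variable {n : ℕ}

/-- The superoperator `K_X(ρ) = −i[X, ρ]`. -/
def K (X ρ : Matrix (Fin n) (Fin n) ℂ) : Matrix (Fin n) (Fin n) ℂ :=
  (-Complex.I) • (X * ρ - ρ * X)

/-- The control Hamiltonian `H(v) = vB + (1−v)C`. -/
def Ham (B C : Matrix (Fin n) (Fin n) ℂ) (v : ℝ) : Matrix (Fin n) (Fin n) ℂ :=
  (v : ℂ) • B + (1 - (v : ℂ)) • C

lemma trace_split (B C ρ p : Matrix (Fin n) (Fin n) ℂ) (v : ℝ) :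
    Matrix.trace (p * K (Ham B C v) ρ) =
      (v : ℂ) * Matrix.trace (p * K B ρ) + (1 - (v : ℂ)) * Matrix.trace (p * K C ρ) := by
  simp only [K, Ham, Matrix.smul_mul, Matrix.mul_smul, Matrix.mul_sub, Matrix.sub_mul,
    Matrix.mul_add, Matrix.add_mul, Matrix.trace_add, Matrix.trace_sub, Matrix.trace_smul,
    smul_eq_mul]
  ring

lemma re_split (v : ℝ) (z w : ℂ) :
    ((v : ℂ) * z + (1 - (v : ℂ)) * w).re = v * z.re + (1 - v) * w.re := by
  simp [Complex.add_re, Complex.mul_re, Complex.sub_re]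

lemma trace_C_zero (C ρ : Matrix (Fin n) (Fin n) ℂ) :
    Matrix.trace ((-C) * K C ρ) = 0 := by
  simp only [K, Matrix.mul_smul, Matrix.mul_sub, Matrix.trace_smul, Matrix.trace_sub,
    Matrix.neg_mul, Matrix.trace_neg]
  rw [← Matrix.mul_assoc, ← Matrix.mul_assoc, Matrix.trace_mul_cycle C ρ C]
  simp

/-- **Theorem 2, part (ii), final bang**: under the PMP conditions with an active final-time
constraint (`λ > 0`) and terminal co-state `p(tf) = −C`, the control is `s ≡ 1` on a final
interval `(tf − ε, tf]`. -/
theorem final_bang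
    (B C : Matrix (Fin n) (Fin n) ℂ) (hB : B.IsHermitian) (hC : C.IsHermitian)
    (tf : ℝ) (htf : 0 < tf)
    (ρ p : ℝ → Matrix (Fin n) (Fin n) ℂ) (s : ℝ → ℝ)
    (hρcont : ContinuousOn ρ (Set.Icc 0 tf)) (hpcont : ContinuousOn p (Set.Icc 0 tf))
    (hρHerm : ∀ t ∈ Set.Icc (0 : ℝ) tf, (ρ t).IsHermitian)
    (hpHerm : ∀ t ∈ Set.Icc (0 : ℝ) tf, (p t).IsHermitian)
    (hsval : ∀ t ∈ Set.Icc (0 : ℝ) tf, s t ∈ Set.Icc (0 : ℝ) 1)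
    -- (a) terminal condition
    (hptf : p tf = -C)
    -- (b) the PMP control Hamiltonian is constant and equal to `λ > 0`
    (lam : ℝ) (hlam : 0 < lam)
    (hconst : ∀ t ∈ Set.Icc (0 : ℝ) tf,
      (Matrix.trace (p t * K (Ham B C (s t)) (ρ t))).re = lam)
    -- (c) the maximum condition
    (hmax : ∀ t ∈ Set.Icc (0 : ℝ) tf, ∀ v ∈ Set.Icc (0 : ℝ) 1,
      (Matrix.trace (p t * K (Ham B C v) (ρ t))).re ≤ lam) :
    ∃ ε > 0, ∀ t ∈ Set.Ioc (tf - ε) tf, s t = 1 := by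
  -- the "switching function"
  set F : ℝ → ℝ := fun t =>
    (Matrix.trace (p t * K B (ρ t))).re - (Matrix.trace (p t * K C (ρ t))).re with hF
  -- abbreviations
  have htfmem : tf ∈ Set.Icc (0 : ℝ) tf := ⟨le_of_lt htf, le_refl _⟩
  -- F is continuous on [0, tf]
  have hG : ∀ X : Matrix (Fin n) (Fin n) ℂ,
      Continuous fun q : Matrix (Fin n) (Fin n) ℂ × Matrix (Fin n) (Fin n) ℂ =>
        (Matrix.trace (q.1 * K X q.2)).re := by
    intro X
    apply Complex.continuous_re.comp
    apply Continuous.matrix_trace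
    apply Continuous.matrix_mul continuous_fst
    unfold K
    exact ((((continuous_const (X := Matrix (Fin n) (Fin n) ℂ × Matrix (Fin n) (Fin n) ℂ) (y := X)).matrix_mul continuous_snd).sub
      (continuous_snd.matrix_mul (continuous_const (X := Matrix (Fin n) (Fin n) ℂ × Matrix (Fin n) (Fin n) ℂ) (y := X)))).const_smul (-Complex.I))
  have hFcont : ContinuousOn F (Set.Icc 0 tf) := by
    have h1 := ((hG B).sub (hG C)).comp_continuousOn (hpcont.prodMk hρcont)
    exact h1
  -- value of F at tf is positive
  have hC0 : ∀ t ∈ Set.Icc (0 : ℝ) tf, (Matrix.trace (p t * K (Ham B C (s t)) (ρ t))).re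
      = s t * (Matrix.trace (p t * K B (ρ t))).re
        + (1 - s t) * (Matrix.trace (p t * K C (ρ t))).re := by
    intro t ht
    rw [trace_split, re_split]
  have hCz : Matrix.trace (p tf * K C (ρ tf)) = 0 := by
    rw [hptf]; exact trace_C_zero C (ρ tf)
  have hFtf : 0 < F tf := by
    have hc := hconst tf htfmem
    rw [hC0 tf htfmem] at hc
    rw [hCz] at hc
    simp only [Complex.zero_re, mul_zero, add_zero] at hc
    -- s tf * (trace (p tf * K B (ρ tf))).re = lam > 0
    have hs := hsval tf htfmem
    have hBpos : 0 < (Matrix.trace (p tf * K B (ρ tf))).re := by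
      by_contra h
      push_neg at h
      nlinarith [hs.1, hs.2]
    simp only [hF]
    have : (Matrix.trace (p tf * K C (ρ tf))).re = 0 := by rw [hCz]; simp
    linarith
  -- get a neighborhood where F > 0
  have hCW : ContinuousWithinAt F (Set.Icc 0 tf) tf := hFcont tf htfmem
  have hev : ∀ᶠ t in nhdsWithin tf (Set.Icc 0 tf), 0 < F t :=
    continuousWithinAt_const.eventually_lt hCW hFtf
  obtain ⟨ε, hε, hball⟩ := Metric.mem_nhdsWithin_iff.mp hev
  refine ⟨min ε tf, lt_min hε htf, ?_⟩
  intro t ht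
  have htmem : t ∈ Set.Icc (0 : ℝ) tf := by
    constructor
    · have := ht.1
      have : tf - min ε tf < t := ht.1
      have h2 : tf - min ε tf ≥ 0 := by
        have := min_le_right ε tf; linarith
      linarith
    · exact ht.2
  have hdist : dist t tf < ε := by
    rw [Real.dist_eq, abs_lt]
    constructor
    · have := min_le_left ε tf
      have := ht.1
      simp only [lt_min_iff] at *
      linarith [min_le_left ε tf]
    · linarith [ht.2, hε]
  have hFt : 0 < F t := hball ⟨Metric.mem_ball.mpr hdist, htmem⟩
  -- now derive s t = 1
  have hc := hconst t htmem
  rw [hC0 t htmem] at hc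
  have hm := hmax t htmem 1 ⟨zero_le_one, le_refl _⟩
  -- note hC0 applied to v = 1 needs trace_split with v = 1; redo:
  have hm1 : (Matrix.trace (p t * K B (ρ t))).re ≤ lam := by
    have := hmax t htmem 1 ⟨zero_le_one, le_refl _⟩
    rwa [trace_split, re_split, one_mul, sub_self, zero_mul, add_zero] at this
  have hs := hsval t htmem
  -- (1 - s t) * F t ≤ 0
  have key : (1 - s t) * F t ≤ 0 := by
    simp only [hF]
    nlinarith
  have hF' : 1 - s t ≤ 0 := by
    by_contra h
    push_neg at h
    nlinarith
  linarith [hs.2, hF']
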